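/- Let n ≥ 2, s ∈ (0,1), r > 0, and let ψ : B'_r → ℝ be a Lipschitz function, where B'_r ⊂ ℝ^{n−1} is the open ball of radius r centered at 0. For ε > 0 define A^ε = {(x', x_n) ∈ B'_r × ℝ : ψ(x') < x_n < ψ(x') + ε} and B^ε = {(x', x_n) ∈ B'_r × ℝ : ψ(x') − ε < x_n < ψ(x')}. Then there exists a constant C > 0, depending only on n, s, r and the Lipschitz constant of ψ, such that for every ε ∈ (0, 1/2), L^s(A^ε, B^ε) ≥ C ε^{1−s}. -/

import Mathlib

open MeasureTheory Filter ENNReal NNReal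

/-- The nonlocal interaction `L^s(A,B) = ∫_A ∫_B |x-y|^{-(n+s)} dy dx ∈ [0,∞]`. -/
noncomputable def Ls (n : ℕ) (s : ℝ) (A B : Set (EuclideanSpace ℝ (Fin n))) : ℝ≥0∞ :=
  ∫⁻ x in A, ∫⁻ y in B, ENNReal.ofReal (1 / ‖x - y‖ ^ ((n : ℝ) + s))

/-- Projection `x ↦ x'` of `x = (x', x_n) ∈ ℝ^{n-1} × ℝ` onto the first coordinates. -/
noncomputable def projE (m : ℕ) (x : EuclideanSpace ℝ (Fin (m + 1))) :
    EuclideanSpace ℝ (Fin m) :=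
  WithLp.toLp 2 (fun i : Fin m => x i.castSucc)

open Metric Set

lemma measurable_projE (m : ℕ) : Measurable (projE m) :=
  (WithLp.measurable_toLp 2 _).comp (measurable_pi_lambda _
    (fun i => (measurable_pi_apply (Fin.castSucc i)).comp (WithLp.measurable_ofLp 2 _)))

lemma slab_volume (m : ℕ) (f : EuclideanSpace ℝ (Fin m) → ℝ) (hf : Measurable f)
    (U : Set (EuclideanSpace ℝ (Fin m))) (hU : MeasurableSet U) (δ : ℝ) :
    volume {x : EuclideanSpace ℝ (Fin (m+1)) |
      projE m x ∈ U ∧ f (projE m x) < x (Fin.last m) ∧ x (Fin.last m) < f (projE m x) + δ} =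
    volume U * ENNReal.ofReal δ := by
  set e1 := (MeasurableEquiv.toLp 2 (Fin (m+1) → ℝ)).symm with he1
  set e2 := MeasurableEquiv.piFinSuccAbove (fun _ : Fin (m+1) => ℝ) (Fin.last m) with he2
  set e3 : ℝ × (Fin m → ℝ) ≃ᵐ (Fin m → ℝ) × ℝ := MeasurableEquiv.prodComm with he3
  set em := (MeasurableEquiv.toLp 2 (Fin m → ℝ)).symm with hem
  set g : EuclideanSpace ℝ (Fin (m+1)) ≃ᵐ (Fin m → ℝ) × ℝ := (e1.trans e2).trans e3 with hgdef
  have hgp : MeasurePreserving g := by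
    have h1 := EuclideanSpace.volume_preserving_symm_measurableEquiv_toLp (Fin (m+1))
    have h2 := volume_preserving_piFinSuccAbove (fun _ : Fin (m+1) => ℝ) (Fin.last m)
    have h3 : MeasurePreserving e3 (volume.prod volume) (volume.prod volume) :=
      Measure.measurePreserving_swap
    exact (h3.comp (h2.comp h1) : _)
  have hemp := EuclideanSpace.volume_preserving_symm_measurableEquiv_toLp (Fin m)
  set U' : Set (Fin m → ℝ) := em.symm ⁻¹' U with hU'def
  have hU' : MeasurableSet U' := em.symm.measurable hU
  set f' : (Fin m → ℝ) → ℝ := f ∘ em.symm with hf'def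
  have hf' : Measurable f' := hf.comp em.symm.measurable
  have hpre : g ⁻¹' (regionBetween f' (fun y => f' y + δ) U') =
      {x : EuclideanSpace ℝ (Fin (m+1)) |
        projE m x ∈ U ∧ f (projE m x) < x (Fin.last m) ∧ x (Fin.last m) < f (projE m x) + δ} := by
    ext x
    have hgx : g x = ((fun i => x (Fin.castSucc i)), x (Fin.last m)) := by
      simp [hgdef, he1, he2, he3, MeasurableEquiv.piFinSuccAbove, Fin.succAbove_last,
        MeasurableEquiv.prodComm, Fin.init]
      rfl
    have hproj : em.symm (fun i => x (Fin.castSucc i)) = projE m x := rfl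
    simp only [Set.mem_preimage, regionBetween, Set.mem_setOf_eq, hgx, hU'def, hf'def,
      Function.comp_apply, Set.mem_preimage, hproj, Set.mem_Ioo]
  rw [← hpre, hgp.measure_preimage
    (measurableSet_regionBetween hf' (show Measurable fun y => f' y + δ from hf'.add measurable_const) hU').nullMeasurableSet,
    Measure.volume_eq_prod,
    volume_regionBetween_eq_lintegral' hf' (show Measurable fun y => f' y + δ from hf'.add measurable_const) hU']
  simp only [Pi.sub_apply]
  simp only [add_sub_cancel_left]
  rw [setLIntegral_const]
  rw [mul_comm, hU'def, (MeasurePreserving.symm em hemp).measure_preimage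
    hU.nullMeasurableSet, mul_comm]

lemma norm_sq_split (m : ℕ) (x y : EuclideanSpace ℝ (Fin (m+1))) :
    ‖x - y‖^2 = ‖projE m x - projE m y‖^2 + (x (Fin.last m) - y (Fin.last m))^2 := by
  have h : ∀ (k : ℕ) (u v : EuclideanSpace ℝ (Fin k)), ‖u - v‖^2 = ∑ i, (u i - v i)^2 := by
    intro k u v
    rw [EuclideanSpace.norm_eq, Real.sq_sqrt (by positivity)]
    refine Finset.sum_congr rfl fun i _ => ?_
    rw [PiLp.sub_apply, Real.norm_eq_abs, sq_abs]
  rw [h, h, Fin.sum_univ_castSucc]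
  simp [projE]

set_option maxHeartbeats 1000000 in
/-- Lower bound `L^s(A^ε, B^ε) ≥ C ε^{1-s}` for the interaction between the two `ε`-strips
above and below a Lipschitz graph over `B'_r` (here `n = m+1 ≥ 2`). -/
theorem strip_interaction_lower_bound
    (m : ℕ) (hm : 1 ≤ m) (s : ℝ) (hs : s ∈ Set.Ioo (0 : ℝ) 1) (r : ℝ) (hr : 0 < r)
    (ψ : EuclideanSpace ℝ (Fin m) → ℝ)
    (Lψ : ℝ≥0) (hLip : LipschitzOnWith Lψ ψ (Metric.ball (0 : EuclideanSpace ℝ (Fin m)) r)) :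
    ∃ C : ℝ, 0 < C ∧ ∀ ε ∈ Set.Ioo (0 : ℝ) (1 / 2),
      ENNReal.ofReal (C * ε ^ (1 - s)) ≤
        Ls (m + 1) s
          {x : EuclideanSpace ℝ (Fin (m + 1)) |
            projE m x ∈ Metric.ball (0 : EuclideanSpace ℝ (Fin m)) r ∧
            ψ (projE m x) < x (Fin.last m) ∧ x (Fin.last m) < ψ (projE m x) + ε}
          {x : EuclideanSpace ℝ (Fin (m + 1)) |
            projE m x ∈ Metric.ball (0 : EuclideanSpace ℝ (Fin m)) r ∧
            ψ (projE m x) - ε < x (Fin.last m) ∧ x (Fin.last m) < ψ (projE m x)} := by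
  obtain ⟨hs0, hs1⟩ := hs
  obtain ⟨g, hg, hgeq⟩ := hLip.extend_real
  set L : ℝ := (Lψ : ℝ) with hLdef
  have hL0 : (0:ℝ) ≤ L := Lψ.coe_nonneg
  set c₀ : ℝ := min (r/2) (1/(4*(L+1))) with hc₀def
  have hc₀ : 0 < c₀ := lt_min (by positivity) (by positivity)
  have hc₀r : c₀ ≤ r/2 := min_le_left _ _
  have hc₀L : c₀ ≤ 1/(4*(L+1)) := min_le_right _ _
  haveI : Nonempty (Fin m) := ⟨⟨0, hm⟩⟩
  haveI : Nontrivial (EuclideanSpace ℝ (Fin m)) := by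
    apply Module.nontrivial_of_finrank_pos (R := ℝ)
    rw [finrank_euclideanSpace_fin]
    exact hm
  set ω : ℝ≥0∞ := volume (Metric.ball (0 : EuclideanSpace ℝ (Fin m)) 1) with hωdef
  have hω0 : ω ≠ 0 := (measure_ball_pos _ _ one_pos).ne'
  have hωt : ω ≠ ⊤ := measure_ball_lt_top.ne
  set W : ℝ := ω.toReal with hWdef
  have hW0 : 0 < W := ENNReal.toReal_pos hω0 hωt
  have hωW : ω = ENNReal.ofReal W := (ENNReal.ofReal_toReal hωt).symm
  set p : ℝ := ((m+1 : ℕ) : ℝ) + s with hpdef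
  have hp0 : 0 < p := by positivity
  refine ⟨(1/(3:ℝ)^p) * c₀^m * (r/2)^m * W^2 / 2, by positivity, ?_⟩
  rintro ε ⟨hε0, hε2⟩
  set ρ : ℝ := c₀ * ε with hρdef
  have hρ0 : 0 < ρ := by positivity
  have hρr : ρ ≤ r/4 := by
    calc ρ ≤ (r/2) * (1/2) := by
          apply mul_le_mul hc₀r hε2.le hε0.le (by positivity)
      _ = r/4 := by ring
  have hLc : L * c₀ ≤ 1/4 := by
    calc L * c₀ ≤ L * (1/(4*(L+1))) := mul_le_mul_of_nonneg_left hc₀L hL0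
      _ ≤ 1/4 := by rw [mul_one_div, div_le_div_iff₀ (by positivity) (by norm_num)]; nlinarith
  have hLρ : L * ρ ≤ ε/4 := by
    rw [hρdef, ← mul_assoc]
    nlinarith
  have hρε : ρ ≤ ε/4 := by
    have h14 : c₀ ≤ 1/4 := hc₀L.trans (by
      rw [div_le_div_iff₀ (by positivity) (by norm_num)]; nlinarith)
    rw [hρdef]; nlinarith
  -- the B-set
  set Bs : Set (EuclideanSpace ℝ (Fin (m+1))) :=
    {x | projE m x ∈ Metric.ball (0 : EuclideanSpace ℝ (Fin m)) r ∧
      ψ (projE m x) - ε < x (Fin.last m) ∧ x (Fin.last m) < ψ (projE m x)} with hBsdef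
  set A' : Set (EuclideanSpace ℝ (Fin (m+1))) :=
    {x | projE m x ∈ Metric.ball (0 : EuclideanSpace ℝ (Fin m)) (r/2) ∧
      g (projE m x) < x (Fin.last m) ∧ x (Fin.last m) < g (projE m x) + ε} with hA'def
  have hballsub : Metric.ball (0 : EuclideanSpace ℝ (Fin m)) (r/2) ⊆
      Metric.ball (0 : EuclideanSpace ℝ (Fin m)) r := Metric.ball_subset_ball (by linarith)
  have hA'sub : A' ⊆ {x : EuclideanSpace ℝ (Fin (m + 1)) |
      projE m x ∈ Metric.ball (0 : EuclideanSpace ℝ (Fin m)) r ∧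
      ψ (projE m x) < x (Fin.last m) ∧ x (Fin.last m) < ψ (projE m x) + ε} := by
    rintro x ⟨h1, h2, h3⟩
    have hmem : projE m x ∈ Metric.ball (0 : EuclideanSpace ℝ (Fin m)) r := hballsub h1
    have := hgeq hmem
    exact ⟨hmem, by rw [this]; exact h2, by rw [this]; exact h3⟩
  have hA'meas : MeasurableSet A' := by
    have h1 : Measurable (fun x : EuclideanSpace ℝ (Fin (m+1)) => g (projE m x)) :=
      hg.continuous.measurable.comp (measurable_projE m)
    have h2 : Measurable fun x : EuclideanSpace ℝ (Fin (m+1)) => x (Fin.last m) :=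
      (measurable_pi_apply _).comp (WithLp.measurable_ofLp 2 _)
    exact (((measurable_projE m) measurableSet_ball).inter
      ((measurableSet_lt h1 h2).inter (measurableSet_lt h2 (h1.add measurable_const))))
  have hA'vol : volume A' =
      volume (Metric.ball (0 : EuclideanSpace ℝ (Fin m)) (r/2)) * ENNReal.ofReal ε :=
    slab_volume m g hg.continuous.measurable _ measurableSet_ball ε
  -- the inner estimate
  have hκ : ∀ x ∈ A',
      ENNReal.ofReal (1/(3*ε)^p) * (ENNReal.ofReal (ρ^m) * ω * ENNReal.ofReal (ε/2)) ≤
        ∫⁻ y in Bs, ENNReal.ofReal (1 / ‖x - y‖ ^ (((m+1 : ℕ) : ℝ) + s)) := by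
    rintro x ⟨hx', hxa, hxb⟩
    have hx'r : projE m x ∈ Metric.ball (0 : EuclideanSpace ℝ (Fin m)) r := hballsub hx'
    have hgx : g (projE m x) = ψ (projE m x) := (hgeq hx'r).symm
    rw [hgx] at hxa hxb
    set t := ψ (projE m x) with htdef
    have hLρ0 : 0 ≤ L * ρ := mul_nonneg hL0 hρ0.le
    set a := t - ε + L*ρ with hadef
    set Bx : Set (EuclideanSpace ℝ (Fin (m+1))) :=
      {y | projE m y ∈ Metric.ball (projE m x) ρ ∧ a < y (Fin.last m) ∧
        y (Fin.last m) < a + (ε - 2*(L*ρ))} with hBxdef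
    have hBxvol : volume Bx =
        volume (Metric.ball (projE m x) ρ) * ENNReal.ofReal (ε - 2*(L*ρ)) :=
      slab_volume m (fun _ => a) measurable_const _ measurableSet_ball _
    have hballx : volume (Metric.ball (projE m x) ρ) = ENNReal.ofReal (ρ^m) * ω := by
      rw [Measure.addHaar_ball _ _ hρ0.le, finrank_euclideanSpace_fin]
    have hBxmeas : MeasurableSet Bx := by
      have h2 : Measurable fun y : EuclideanSpace ℝ (Fin (m+1)) => y (Fin.last m) :=
        (measurable_pi_apply _).comp (WithLp.measurable_ofLp 2 _)
      exact (((measurable_projE m) measurableSet_ball).inter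
        ((measurableSet_lt measurable_const h2).inter (measurableSet_lt h2 measurable_const)))
    have hBxsub : Bx ⊆ Bs := by
      rintro y ⟨h1, h2, h3⟩
      have hd : dist (projE m y) (projE m x) < ρ := mem_ball.mp h1
      have hd0 : 0 ≤ dist (projE m y) (projE m x) := dist_nonneg
      have hyr : projE m y ∈ Metric.ball (0 : EuclideanSpace ℝ (Fin m)) r := by
        rw [mem_ball] at hx' ⊢
        calc dist (projE m y) 0 ≤ dist (projE m y) (projE m x) + dist (projE m x) 0 :=
              dist_triangle _ _ _
          _ < ρ + r/2 := by linarith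
          _ ≤ r := by linarith
      have hψy : dist (ψ (projE m y)) t ≤ L * dist (projE m y) (projE m x) :=
        hLip.dist_le_mul _ hyr _ hx'r
      have hψy' : |ψ (projE m y) - t| ≤ L * ρ := by
        rw [Real.dist_eq] at hψy
        refine hψy.trans (mul_le_mul_of_nonneg_left hd.le hL0)
      obtain ⟨hψ1, hψ2⟩ := abs_le.mp hψy'
      exact ⟨hyr, by linarith, by linarith⟩
    calc ENNReal.ofReal (1/(3*ε)^p) * (ENNReal.ofReal (ρ^m) * ω * ENNReal.ofReal (ε/2))
        ≤ ENNReal.ofReal (1/(3*ε)^p) * volume Bx := by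
          rw [hBxvol, hballx]
          have h1 : ENNReal.ofReal (ε/2) ≤ ENNReal.ofReal (ε - 2*(L*ρ)) :=
            ENNReal.ofReal_le_ofReal (by linarith)
          exact mul_le_mul_right (mul_le_mul_right h1 _) _
      _ = ∫⁻ _ in Bx, ENNReal.ofReal (1/(3*ε)^p) := by rw [setLIntegral_const]
      _ ≤ ∫⁻ y in Bx, ENNReal.ofReal (1 / ‖x - y‖ ^ (((m+1 : ℕ) : ℝ) + s)) := by
          refine lintegral_mono_ae ?_
          filter_upwards [ae_restrict_mem hBxmeas] with y hy
          obtain ⟨h1, h2, h3⟩ := hy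
          have hd : dist (projE m y) (projE m x) < ρ := mem_ball.mp h1
          have hlast1 : 0 < x (Fin.last m) - y (Fin.last m) := by linarith
          have hlast2 : x (Fin.last m) - y (Fin.last m) < 2*ε := by linarith
          have hsplit := norm_sq_split m x y
          have hproj : ‖projE m x - projE m y‖ < ε := by
            rw [← dist_eq_norm, dist_comm]
            linarith
          have hprojnn : 0 ≤ ‖projE m x - projE m y‖ := norm_nonneg _
          have hsq : ‖x - y‖^2 ≤ (3*ε)^2 := by rw [hsplit]; nlinarith
          have hpos : 0 < ‖x - y‖ := by
            rw [norm_sub_pos_iff]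
            intro h
            rw [h] at hlast1
            linarith
          have hle : ‖x - y‖ ≤ 3*ε := by nlinarith [norm_nonneg (x - y)]
          rw [← hpdef]
          apply ENNReal.ofReal_le_ofReal
          exact one_div_le_one_div_of_le (Real.rpow_pos_of_pos hpos _)
            (Real.rpow_le_rpow (norm_nonneg _) hle hp0.le)
      _ ≤ ∫⁻ y in Bs, ENNReal.ofReal (1 / ‖x - y‖ ^ (((m+1 : ℕ) : ℝ) + s)) :=
          lintegral_mono' (Measure.restrict_mono hBxsub le_rfl) le_rfl
  -- put it together
  have key : ENNReal.ofReal (1/(3*ε)^p) * (ENNReal.ofReal (ρ^m) * ω * ENNReal.ofReal (ε/2)) *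
      (volume (Metric.ball (0 : EuclideanSpace ℝ (Fin m)) (r/2)) * ENNReal.ofReal ε) ≤
      Ls (m + 1) s {x : EuclideanSpace ℝ (Fin (m + 1)) |
        projE m x ∈ Metric.ball (0 : EuclideanSpace ℝ (Fin m)) r ∧
        ψ (projE m x) < x (Fin.last m) ∧ x (Fin.last m) < ψ (projE m x) + ε} Bs := by
    rw [Ls]
    calc ENNReal.ofReal (1/(3*ε)^p) * (ENNReal.ofReal (ρ^m) * ω * ENNReal.ofReal (ε/2)) *
        (volume (Metric.ball (0 : EuclideanSpace ℝ (Fin m)) (r/2)) * ENNReal.ofReal ε)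
        = ∫⁻ _ in A', (ENNReal.ofReal (1/(3*ε)^p) *
            (ENNReal.ofReal (ρ^m) * ω * ENNReal.ofReal (ε/2))) := by
          rw [setLIntegral_const, hA'vol]
      _ ≤ ∫⁻ x in A', ∫⁻ y in Bs, ENNReal.ofReal (1 / ‖x - y‖ ^ (((m+1 : ℕ) : ℝ) + s)) := by
          refine lintegral_mono_ae ?_
          filter_upwards [ae_restrict_mem hA'meas] with x hx using hκ x hx
      _ ≤ ∫⁻ x in {x : EuclideanSpace ℝ (Fin (m + 1)) |
            projE m x ∈ Metric.ball (0 : EuclideanSpace ℝ (Fin m)) r ∧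
            ψ (projE m x) < x (Fin.last m) ∧ x (Fin.last m) < ψ (projE m x) + ε},
          ∫⁻ y in Bs, ENNReal.ofReal (1 / ‖x - y‖ ^ (((m+1 : ℕ) : ℝ) + s)) :=
          lintegral_mono' (Measure.restrict_mono hA'sub le_rfl) le_rfl
  refine le_trans (le_of_eq ?_) key
  -- arithmetic
  rw [Measure.addHaar_ball _ _ (by positivity : (0:ℝ) ≤ r/2), finrank_euclideanSpace_fin,
    ← hωdef, hωW]
  rw [← ENNReal.ofReal_mul (by positivity), ← ENNReal.ofReal_mul (by positivity),
    ← ENNReal.ofReal_mul (by positivity), ← ENNReal.ofReal_mul (by positivity),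
    ← ENNReal.ofReal_mul (by positivity), ← ENNReal.ofReal_mul (by positivity)]
  congr 1
  have hεp : (0:ℝ) < ε ^ p := Real.rpow_pos_of_pos hε0 _
  have h3p : (0:ℝ) < (3:ℝ) ^ p := Real.rpow_pos_of_pos (by norm_num) _
  have hmain : ε ^ (1-s) * ε ^ p = ε^(m:ℕ) * (ε * ε) := by
    rw [← Real.rpow_natCast ε m, ← Real.rpow_add hε0,
      show ε * ε = ε ^ (2:ℝ) by
        rw [show (2:ℝ) = ((2:ℕ):ℝ) by norm_num, Real.rpow_natCast]; ring,
      ← Real.rpow_add hε0]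
    congr 1
    rw [hpdef]
    push_cast
    ring
  rw [Real.mul_rpow (by norm_num) hε0.le, hρdef, mul_pow]
  have hfin : ε ^ (1-s) = ε^(m:ℕ) * (ε * ε) / ε ^ p := by
    rw [eq_div_iff hεp.ne', hmain]
  rw [hfin]
  field_simp
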